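/- Let A be a finitely generated commutative ℚ-algebra, let a₁, …, a_m ∈ A be elements such that A is finitely generated as a module over the ℚ-subalgebra ℚ[a₁, …, a_m], and let b₁, …, b_l ∈ A be arbitrary elements. Then there exist a real constant c > 0 and a positive integer k such that for every ℚ-algebra homomorphism w from A to the finite adele ring 𝔸_f of ℚ, one has H_f(w(b₁), …, w(b_l)) ≤ c · H_f(w(a₁), …, w(a_m))^k. -/

import Mathlib

open IsDedekindDomain

/-- An element of the finite adele ring `𝔸_f` of `ℚ` is everywhere integral if its
component at every finite place lies in the corresponding ring of integers. -/
def IsEverywhereIntegral (x : FiniteAdeleRing ℤ ℚ) : Prop :=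
  ∀ v : HeightOneSpectrum ℤ, x v ∈ v.adicCompletionIntegers ℚ

/-- The non-archimedean height of a finite tuple of finite adeles: the least positive
integer `n` such that `n • xᵢ` is everywhere integral for every `i`. -/
noncomputable def adelicHf {r : ℕ} (x : Fin r → FiniteAdeleRing ℤ ℚ) : ℕ :=
  sInf {n : ℕ | 1 ≤ n ∧ ∀ i, IsEverywhereIntegral ((n : FiniteAdeleRing ℤ ℚ) * x i)}

open scoped Multiplicative

noncomputable def projv (v : HeightOneSpectrum ℤ) : FiniteAdeleRing ℤ ℚ →+* v.adicCompletion ℚ :=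
  RestrictedProduct.evalRingHom (fun v : HeightOneSpectrum ℤ => v.adicCompletion ℚ) v

lemma projv_apply (v : HeightOneSpectrum ℤ) (x : FiniteAdeleRing ℤ ℚ) : projv v x = x v := rfl

lemma comp_mul (v : HeightOneSpectrum ℤ) (x y : FiniteAdeleRing ℤ ℚ) :
    (x * y) v = x v * y v := (projv v).map_mul x y

lemma comp_natCast (v : HeightOneSpectrum ℤ) (n : ℕ) :
    (n : FiniteAdeleRing ℤ ℚ) v = (n : v.adicCompletion ℚ) := map_natCast (projv v) n

lemma comp_add (v : HeightOneSpectrum ℤ) (x y : FiniteAdeleRing ℤ ℚ) :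
    (x + y) v = x v + y v := (projv v).map_add x y

lemma comp_neg (v : HeightOneSpectrum ℤ) (x : FiniteAdeleRing ℤ ℚ) :
    (-x) v = -(x v) := (projv v).map_neg x

lemma comp_intCast (v : HeightOneSpectrum ℤ) (n : ℤ) :
    (n : FiniteAdeleRing ℤ ℚ) v = (n : v.adicCompletion ℚ) := map_intCast (projv v) n

lemma comp_pow (v : HeightOneSpectrum ℤ) (x : FiniteAdeleRing ℤ ℚ) (k : ℕ) :
    (x ^ k) v = (x v) ^ k := (projv v).map_pow x k

lemma EI_mul {x y : FiniteAdeleRing ℤ ℚ} (hx : IsEverywhereIntegral x)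
    (hy : IsEverywhereIntegral y) : IsEverywhereIntegral (x * y) := fun v => by
  rw [comp_mul]; exact mul_mem (hx v) (hy v)

lemma EI_add {x y : FiniteAdeleRing ℤ ℚ} (hx : IsEverywhereIntegral x)
    (hy : IsEverywhereIntegral y) : IsEverywhereIntegral (x + y) := fun v => by
  rw [comp_add]; exact add_mem (hx v) (hy v)

lemma EI_neg {x : FiniteAdeleRing ℤ ℚ} (hx : IsEverywhereIntegral x) :
    IsEverywhereIntegral (-x) := fun v => by
  rw [comp_neg]; exact neg_mem (hx v)

lemma EI_intCast (n : ℤ) : IsEverywhereIntegral (n : FiniteAdeleRing ℤ ℚ) := fun v => by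
  rw [comp_intCast]
  have := HeightOneSpectrum.coe_mem_adicCompletionIntegers (R := ℤ) (K := ℚ) (v := v) n
  simpa using this

lemma EI_natCast (n : ℕ) : IsEverywhereIntegral (n : FiniteAdeleRing ℤ ℚ) := by
  have := EI_intCast (n : ℤ)
  rwa [Int.cast_natCast] at this

lemma EI_natPow (H f : ℕ) : IsEverywhereIntegral ((H : FiniteAdeleRing ℤ ℚ) ^ f) := by
  have := EI_natCast (H ^ f)
  rwa [Nat.cast_pow] at this

lemma exists_nat_mul_EI (x : FiniteAdeleRing ℤ ℚ) :
    ∃ n : ℕ, 1 ≤ n ∧ IsEverywhereIntegral ((n : FiniteAdeleRing ℤ ℚ) * x) := by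
  have hfin : {v : HeightOneSpectrum ℤ | ¬ x v ∈ v.adicCompletionIntegers ℚ}.Finite :=
    Filter.eventually_cofinite.mp x.2
  choose bb hbb hbx using fun v : HeightOneSpectrum ℤ =>
    HeightOneSpectrum.adicCompletion.mul_nonZeroDivisor_mem_adicCompletionIntegers v (x v)
  have key : ∃ B : ℤ, B ≠ 0 ∧ IsEverywhereIntegral ((B : FiniteAdeleRing ℤ ℚ) * x) := by
    classical
    refine ⟨∏ u ∈ hfin.toFinset, bb u,
      Finset.prod_ne_zero_iff.mpr fun u _ => nonZeroDivisors.ne_zero (hbb u), fun v => ?_⟩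
    by_cases hv : v ∈ hfin.toFinset
    · rw [comp_mul, comp_intCast]
      have e : (((∏ u ∈ hfin.toFinset, bb u : ℤ)) : v.adicCompletion ℚ) * x v
          = algebraMap ℤ (v.adicCompletion ℚ) (∏ u ∈ hfin.toFinset.erase v, bb u)
            * (x v * algebraMap ℤ (v.adicCompletion ℚ) (bb v)) := by
        rw [← Finset.mul_prod_erase _ _ hv]; simp only [eq_intCast]; push_cast; ring
      rw [e]
      exact mul_mem (HeightOneSpectrum.coe_mem_adicCompletionIntegers v _) (hbx v)
    · have hxv : x v ∈ v.adicCompletionIntegers ℚ := by simpa using hv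
      rw [comp_mul]
      exact mul_mem (EI_intCast _ v) hxv
  obtain ⟨B, hB0, hEIB⟩ := key
  let b : nonZeroDivisors ℤ := ⟨B, mem_nonZeroDivisors_of_ne_zero hB0⟩
  have hb0 : (b : ℤ) ≠ 0 := nonZeroDivisors.coe_ne_zero b
  have hEI : IsEverywhereIntegral (((b : ℤ) : FiniteAdeleRing ℤ ℚ) * x) := hEIB
  set n := (b : ℤ).natAbs with hn
  refine ⟨n, by omega, ?_⟩
  rcases Int.natAbs_eq (b : ℤ) with h | h
  · have e : ((n : ℕ) : FiniteAdeleRing ℤ ℚ) = (((b:ℤ)) : FiniteAdeleRing ℤ ℚ) := by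
      rw [h, Int.cast_natCast]
    rw [e]; exact hEI
  · have e : ((n : ℕ) : FiniteAdeleRing ℤ ℚ) * x = -((((b:ℤ)) : FiniteAdeleRing ℤ ℚ) * x) := by
      have e2 : (((b:ℤ)) : FiniteAdeleRing ℤ ℚ) = -((n : ℕ) : FiniteAdeleRing ℤ ℚ) := by
        rw [h, Int.cast_neg, Int.cast_natCast]
      rw [e2]; ring
    rw [e]; exact EI_neg hEI

lemma adelicHf_spec {r : ℕ} (x : Fin r → FiniteAdeleRing ℤ ℚ) :
    1 ≤ adelicHf x ∧ ∀ i, IsEverywhereIntegral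
      ((adelicHf x : FiniteAdeleRing ℤ ℚ) * x i) := by
  choose f hf1 hf2 using fun i => exists_nat_mul_EI (x i)
  have hne : {n : ℕ | 1 ≤ n ∧ ∀ i, IsEverywhereIntegral
      ((n : FiniteAdeleRing ℤ ℚ) * x i)}.Nonempty := by
    refine ⟨∏ i, f i, Finset.one_le_prod' (fun i _ => hf1 i), fun i => ?_⟩
    have e : ((∏ j, f j : ℕ) : FiniteAdeleRing ℤ ℚ) * x i
        = ((∏ j ∈ Finset.univ.erase i, f j : ℕ) : FiniteAdeleRing ℤ ℚ)
          * (((f i : ℕ) : FiniteAdeleRing ℤ ℚ) * x i) := by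
      rw [← (Finset.mul_prod_erase Finset.univ f (Finset.mem_univ i))]
      push_cast
      ring
    rw [e]
    exact EI_mul (EI_natCast _) (hf2 i)
  exact Nat.sInf_mem hne

lemma adelicHf_le {r : ℕ} (x : Fin r → FiniteAdeleRing ℤ ℚ) (n : ℕ) (h1 : 1 ≤ n)
    (h2 : ∀ i, IsEverywhereIntegral ((n : FiniteAdeleRing ℤ ℚ) * x i)) :
    adelicHf x ≤ n := Nat.sInf_le ⟨h1, h2⟩

lemma EI_mono {D D' d d' H : ℕ} (hD : D' ∣ D) (hd : d' ≤ d) {z : FiniteAdeleRing ℤ ℚ}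
    (h : IsEverywhereIntegral ((D' : FiniteAdeleRing ℤ ℚ) * (H : FiniteAdeleRing ℤ ℚ) ^ d' * z)) :
    IsEverywhereIntegral ((D : FiniteAdeleRing ℤ ℚ) * (H : FiniteAdeleRing ℤ ℚ) ^ d * z) := by
  obtain ⟨e, rfl⟩ := hD
  obtain ⟨f, rfl⟩ := Nat.exists_eq_add_of_le hd
  have ee : ((D' * e : ℕ) : FiniteAdeleRing ℤ ℚ) * (H : FiniteAdeleRing ℤ ℚ) ^ (d' + f) * z
      = ((e : FiniteAdeleRing ℤ ℚ) * (H : FiniteAdeleRing ℤ ℚ) ^ f)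
        * ((D' : FiniteAdeleRing ℤ ℚ) * (H : FiniteAdeleRing ℤ ℚ) ^ d' * z) := by
    push_cast
    ring
  rw [ee]
  exact EI_mul (EI_mul (EI_natCast e) (EI_natPow H f)) h

open Polynomial in
theorem loc {K : Type*} [Field K] [Valued K (WithZero (Multiplicative ℤ))] (q : K[X]) (hm : q.Monic)
    (x N : K) (hx : q.eval x = 0) (hN : Valued.v N ≤ 1)
    (hc : ∀ j < q.natDegree, Valued.v (N * q.coeff j) ≤ 1) :
    Valued.v (N * x) ≤ 1 := by
  by_contra h
  push_neg at h
  have hvx : 1 < Valued.v x := by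
    by_contra hx1
    push_neg at hx1
    exact absurd (by calc Valued.v (N * x) = Valued.v N * Valued.v x := Valuation.map_mul _ _ _
      _ ≤ 1 * 1 := mul_le_mul' hN hx1
      _ = 1 := one_mul 1) (not_le.mpr h)
  have hN0 : N ≠ 0 := by rintro rfl; simp at h
  have hvN0 : Valued.v N ≠ 0 := by simpa using hN0
  set n := q.natDegree with hn
  have hn0 : n ≠ 0 := by
    intro h0
    have : q = 1 := hm.natDegree_eq_zero.mp h0
    rw [this] at hx
    simp at hx
  have hsum : x ^ n = -∑ i ∈ Finset.range n, q.coeff i * x ^ i := by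
    have := hm.as_sum
    apply_fun (Polynomial.eval x) at this
    rw [hx] at this
    simp [eval_finset_sum] at this
    rw [eq_neg_iff_add_eq_zero]
    linear_combination -this
  have key : Valued.v x ^ n ≤ (Valued.v N)⁻¹ * Valued.v x ^ (n - 1) := by
    calc Valued.v x ^ n = Valued.v (x ^ n) := (map_pow _ _ _).symm
      _ = Valued.v (∑ i ∈ Finset.range n, q.coeff i * x ^ i) := by rw [hsum, Valuation.map_neg]
      _ ≤ (Valued.v N)⁻¹ * Valued.v x ^ (n - 1) := ?_
    apply Valuation.map_sum_le
    intro i hi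
    rw [Finset.mem_range] at hi
    rw [Valuation.map_mul, map_pow]
    have hci := hc i hi
    rw [Valuation.map_mul] at hci
    have h1 : Valued.v (q.coeff i) ≤ (Valued.v N)⁻¹ :=
      calc Valued.v (q.coeff i) = (Valued.v N)⁻¹ * (Valued.v N * Valued.v (q.coeff i)) := by
            rw [← mul_assoc, inv_mul_cancel₀ hvN0, one_mul]
        _ ≤ (Valued.v N)⁻¹ * 1 := mul_le_mul_right hci _
        _ = (Valued.v N)⁻¹ := mul_one _
    have h2 : Valued.v x ^ i ≤ Valued.v x ^ (n - 1) :=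
      pow_le_pow_right₀ hvx.le (by omega)
    exact mul_le_mul' h1 h2
  have hx0 : Valued.v x ≠ 0 := (zero_lt_one.trans hvx).ne'
  have hfin : Valued.v N * Valued.v x ≤ 1 := by
    have hpow : Valued.v x ^ n = Valued.v x ^ (n-1) * Valued.v x := by
      rw [← pow_succ]; congr 1; omega
    rw [hpow] at key
    have h3 := mul_le_mul_right key (Valued.v N)
    rw [← mul_assoc, mul_comm (Valued.v N) _, mul_assoc ((Valued.v x)^(n-1))] at h3
    rw [← mul_assoc (Valued.v N), mul_inv_cancel₀ hvN0, one_mul] at h3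
    have hpne : (Valued.v x)^(n-1) ≠ 0 := pow_ne_zero _ hx0
    calc Valued.v N * Valued.v x
        = ((Valued.v x)^(n-1))⁻¹ * ((Valued.v x)^(n-1) * (Valued.v N * Valued.v x)) := by
          rw [← mul_assoc, inv_mul_cancel₀ hpne, one_mul]
      _ ≤ ((Valued.v x)^(n-1))⁻¹ * (Valued.v x)^(n-1) := mul_le_mul_right h3 _
      _ = 1 := inv_mul_cancel₀ hpne
  rw [Valuation.map_mul] at h
  exact absurd hfin (not_le.mpr h)

/-- Functoriality of heights: if `A` is a finitely generated commutative `ℚ`-algebra which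
is module-finite over the subalgebra generated by `a₁, …, a_m`, and `b₁, …, b_l ∈ A`, then
there exist `c > 0` and `k ≥ 1` such that for every `ℚ`-algebra homomorphism
`w : A → 𝔸_f` one has `H_f(w(b)) ≤ c · H_f(w(a))^k`. -/
theorem height_functoriality_adeles
    (A : Type*) [CommRing A] [Algebra ℚ A] [Algebra.FiniteType ℚ A]
    (m l : ℕ) (a : Fin m → A) (b : Fin l → A)
    (hfin : Module.Finite ↥(Algebra.adjoin ℚ (Set.range a)) A) :
    ∃ c : ℝ, 0 < c ∧ ∃ k : ℕ, 0 < k ∧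
      ∀ w : A →ₐ[ℚ] FiniteAdeleRing ℤ ℚ,
        (adelicHf (fun i => w (b i)) : ℝ) ≤
          c * (adelicHf (fun i => w (a i)) : ℝ) ^ k := by
  classical
  set R₀ := Algebra.adjoin ℚ (Set.range a) with hR₀
  let P : A → Prop := fun x => ∃ D : ℕ, 1 ≤ D ∧ ∃ d : ℕ,
    ∀ (w : A →ₐ[ℚ] FiniteAdeleRing ℤ ℚ) (H : ℕ),
      (∀ i, IsEverywhereIntegral ((H : FiniteAdeleRing ℤ ℚ) * w (a i))) →
      IsEverywhereIntegral
        ((D : FiniteAdeleRing ℤ ℚ) * (H : FiniteAdeleRing ℤ ℚ) ^ d * w x)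
  have hP : ∀ x ∈ R₀, P x := by
    intro x hx
    induction hx using Algebra.adjoin_induction with
    | mem y hy =>
      obtain ⟨i, rfl⟩ := hy
      refine ⟨1, le_refl 1, 1, fun w H hyp => ?_⟩
      simpa using hyp i
    | algebraMap r =>
      refine ⟨r.den, r.den_pos, 0, fun w H hyp => ?_⟩
      have hden : ((r.den : ℚ)) ≠ 0 := Nat.cast_ne_zero.mpr r.den_nz
      have hnum : ((r.den : ℚ)) * r = (r.num : ℚ) := by
        have h0 := Rat.num_div_den r
        rw [div_eq_iff hden] at h0
        rw [mul_comm, h0]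
      have e : ((r.den : ℕ) : FiniteAdeleRing ℤ ℚ) * (H : FiniteAdeleRing ℤ ℚ) ^ 0
            * w ((algebraMap ℚ A) r) = ((r.num : ℤ) : FiniteAdeleRing ℤ ℚ) := by
        rw [pow_zero, mul_one, AlgHom.commutes]
        calc ((r.den : ℕ) : FiniteAdeleRing ℤ ℚ) * algebraMap ℚ (FiniteAdeleRing ℤ ℚ) r
            = algebraMap ℚ (FiniteAdeleRing ℤ ℚ) ((r.den : ℚ) * r) := by
              rw [map_mul, map_natCast]
          _ = algebraMap ℚ (FiniteAdeleRing ℤ ℚ) ((r.num : ℚ)) := by rw [hnum]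
          _ = ((r.num : ℤ) : FiniteAdeleRing ℤ ℚ) := by rw [map_intCast]
      rw [e]
      exact EI_intCast _
    | add x y hx hy ihx ihy =>
      obtain ⟨D1, hD1, d1, h1⟩ := ihx
      obtain ⟨D2, hD2, d2, h2⟩ := ihy
      refine ⟨D1 * D2, Nat.one_le_iff_ne_zero.mpr (by positivity), max d1 d2, fun w H hyp => ?_⟩
      have e : ((D1 * D2 : ℕ) : FiniteAdeleRing ℤ ℚ)
            * (H : FiniteAdeleRing ℤ ℚ) ^ (max d1 d2) * w (x + y)
          = ((D2 : FiniteAdeleRing ℤ ℚ) * (H : FiniteAdeleRing ℤ ℚ) ^ (max d1 d2 - d1))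
              * ((D1 : FiniteAdeleRing ℤ ℚ) * (H : FiniteAdeleRing ℤ ℚ) ^ d1 * w x)
            + ((D1 : FiniteAdeleRing ℤ ℚ) * (H : FiniteAdeleRing ℤ ℚ) ^ (max d1 d2 - d2))
              * ((D2 : FiniteAdeleRing ℤ ℚ) * (H : FiniteAdeleRing ℤ ℚ) ^ d2 * w y) := by
        have e1 : (H : FiniteAdeleRing ℤ ℚ) ^ (max d1 d2)
            = (H : FiniteAdeleRing ℤ ℚ) ^ (max d1 d2 - d1) * (H : FiniteAdeleRing ℤ ℚ) ^ d1 := by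
          rw [← pow_add, Nat.sub_add_cancel (le_max_left d1 d2)]
        have e2 : (H : FiniteAdeleRing ℤ ℚ) ^ (max d1 d2)
            = (H : FiniteAdeleRing ℤ ℚ) ^ (max d1 d2 - d2) * (H : FiniteAdeleRing ℤ ℚ) ^ d2 := by
          rw [← pow_add, Nat.sub_add_cancel (le_max_right d1 d2)]
        rw [map_add]
        push_cast
        rw [mul_add]
        congr 1
        · rw [e1]; ring
        · rw [e2]; ring
      rw [e]
      exact EI_add (EI_mul (EI_mul (EI_natCast _) (EI_natPow _ _)) (h1 w H hyp))
        (EI_mul (EI_mul (EI_natCast _) (EI_natPow _ _)) (h2 w H hyp))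
    | mul x y hx hy ihx ihy =>
      obtain ⟨D1, hD1, d1, h1⟩ := ihx
      obtain ⟨D2, hD2, d2, h2⟩ := ihy
      refine ⟨D1 * D2, Nat.one_le_iff_ne_zero.mpr (by positivity), d1 + d2, fun w H hyp => ?_⟩
      have e : ((D1 * D2 : ℕ) : FiniteAdeleRing ℤ ℚ)
            * (H : FiniteAdeleRing ℤ ℚ) ^ (d1 + d2) * w (x * y)
          = ((D1 : FiniteAdeleRing ℤ ℚ) * (H : FiniteAdeleRing ℤ ℚ) ^ d1 * w x)
            * ((D2 : FiniteAdeleRing ℤ ℚ) * (H : FiniteAdeleRing ℤ ℚ) ^ d2 * w y) := by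
        rw [map_mul]
        push_cast
        rw [pow_add]
        ring
      rw [e]
      exact EI_mul (h1 w H hyp) (h2 w H hyp)
  have hB : ∀ x : A, ∃ D : ℕ, 1 ≤ D ∧ ∃ d : ℕ,
      ∀ (w : A →ₐ[ℚ] FiniteAdeleRing ℤ ℚ) (H : ℕ),
        (∀ i, IsEverywhereIntegral ((H : FiniteAdeleRing ℤ ℚ) * w (a i))) →
        IsEverywhereIntegral
          ((D : FiniteAdeleRing ℤ ℚ) * (H : FiniteAdeleRing ℤ ℚ) ^ d * w x) := by
    intro x
    have hint : IsIntegral (↥R₀) x := IsIntegral.of_finite (↥R₀) x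
    obtain ⟨p, hpm, hpz⟩ := hint
    set n := p.natDegree with hn
    choose Dc hDc dc hc using fun j : ℕ => hP ((p.coeff j : A)) (p.coeff j).2
    refine ⟨∏ j ∈ Finset.range n, Dc j, Finset.one_le_prod' (fun j _ => hDc j),
      (Finset.range n).sup dc, fun w H hyp => ?_⟩
    set D := ∏ j ∈ Finset.range n, Dc j with hD
    set d := (Finset.range n).sup dc with hd
    have hcoeff : ∀ j < n, IsEverywhereIntegral
        ((D : FiniteAdeleRing ℤ ℚ) * (H : FiniteAdeleRing ℤ ℚ) ^ d * w (p.coeff j : A)) :=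
      fun j hj => EI_mono (Finset.dvd_prod_of_mem Dc (Finset.mem_range.mpr hj))
        (Finset.le_sup (Finset.mem_range.mpr hj)) (hc j w H hyp)
    intro v
    set φv : (↥R₀) →+* v.adicCompletion ℚ :=
      ((projv v).comp w.toRingHom).comp (algebraMap (↥R₀) A) with hφv
    set q := p.map φv with hq
    have hqm : q.Monic := hpm.map φv
    have hqdeg : q.natDegree = n := hpm.natDegree_map φv
    have hqe : q.eval (projv v (w x)) = 0 := by
      rw [hq, Polynomial.eval_map, hφv]
      have h0 := Polynomial.hom_eval₂ p (algebraMap (↥R₀) A) ((projv v).comp w.toRingHom) x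
      rw [hpz, map_zero] at h0
      exact h0.symm
    have hcompN : ((D : FiniteAdeleRing ℤ ℚ) * (H : FiniteAdeleRing ℤ ℚ) ^ d) v
        = (D : v.adicCompletion ℚ) * (H : v.adicCompletion ℚ) ^ d := by
      rw [comp_mul, comp_pow, comp_natCast, comp_natCast]
    have hNle : Valued.v ((D : v.adicCompletion ℚ) * (H : v.adicCompletion ℚ) ^ d) ≤ 1 := by
      have hE := EI_mul (EI_natCast D) (EI_natPow H d) v
      rw [HeightOneSpectrum.mem_adicCompletionIntegers, hcompN] at hE
      exact hE
    have hcv : ∀ j < q.natDegree,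
        Valued.v ((D : v.adicCompletion ℚ) * (H : v.adicCompletion ℚ) ^ d * q.coeff j) ≤ 1 := by
      rw [hqdeg]
      intro j hj
      have hE := hcoeff j hj v
      rw [HeightOneSpectrum.mem_adicCompletionIntegers] at hE
      have hcomp : ((D : FiniteAdeleRing ℤ ℚ) * (H : FiniteAdeleRing ℤ ℚ) ^ d
            * w (p.coeff j : A)) v
          = (D : v.adicCompletion ℚ) * (H : v.adicCompletion ℚ) ^ d * q.coeff j := by
        rw [comp_mul, hcompN, hq, Polynomial.coeff_map]
        rfl
      rwa [hcomp] at hE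
    have hloc := loc q hqm (projv v (w x))
      ((D : v.adicCompletion ℚ) * (H : v.adicCompletion ℚ) ^ d) hqe hNle hcv
    rw [HeightOneSpectrum.mem_adicCompletionIntegers]
    have hcomp2 : ((D : FiniteAdeleRing ℤ ℚ) * (H : FiniteAdeleRing ℤ ℚ) ^ d * w x) v
        = (D : v.adicCompletion ℚ) * (H : v.adicCompletion ℚ) ^ d * projv v (w x) := by
      rw [comp_mul, hcompN]
      rfl
    rwa [hcomp2]
  choose Db hDb db hb using fun i : Fin l => hB (b i)
  have hDpos : 1 ≤ ∏ i, Db i := Finset.one_le_prod' (fun i _ => hDb i)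
  refine ⟨((∏ i, Db i : ℕ) : ℝ), by exact_mod_cast Nat.lt_of_lt_of_le Nat.zero_lt_one hDpos,
    Finset.univ.sup db + 1, Nat.succ_pos _, fun w => ?_⟩
  set H := adelicHf (fun i => w (a i)) with hH
  obtain ⟨hH1, hHint⟩ := adelicHf_spec (fun i => w (a i))
  set k := Finset.univ.sup db + 1 with hk
  have hEIb : ∀ i, IsEverywhereIntegral
      (((∏ i, Db i : ℕ) : FiniteAdeleRing ℤ ℚ) * (H : FiniteAdeleRing ℤ ℚ) ^ k * w (b i)) :=
    fun i => EI_mono (Finset.dvd_prod_of_mem Db (Finset.mem_univ i))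
      ((Finset.le_sup (Finset.mem_univ i)).trans (Nat.le_succ _)) (hb i w H hHint)
  have hle : adelicHf (fun i => w (b i)) ≤ (∏ i, Db i) * H ^ k := by
    apply adelicHf_le
    · exact Nat.one_le_iff_ne_zero.mpr (by positivity)
    · intro i
      have e : (((∏ i, Db i) * H ^ k : ℕ) : FiniteAdeleRing ℤ ℚ)
          = ((∏ i, Db i : ℕ) : FiniteAdeleRing ℤ ℚ) * (H : FiniteAdeleRing ℤ ℚ) ^ k := by
        push_cast
        ring
      rw [e]
      exact hEIb i
  calc (adelicHf (fun i => w (b i)) : ℝ) ≤ (((∏ i, Db i) * H ^ k : ℕ) : ℝ) := by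
        exact_mod_cast hle
    _ = ((∏ i, Db i : ℕ) : ℝ) * (H : ℝ) ^ k := by push_cast; ring
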